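/- Let μ be a probability measure on [0,∞)^d, u₊ ∈ [0,∞)^d, and define f(ξ) := ∫ exp(ξ ⟨u₊, y⟩) dμ(y) for ξ ∈ ℝ. Let c_1 ≥ c_2 ≥ ⋯ ≥ c_N = 1 and c̄_1 ≥ c̄_2 ≥ ⋯ ≥ c̄_N > 0 be real numbers with c̄_k ≤ c_k for every k. Assume f(1) < ∞ with f(1) > c_1, and that there exists λ < 0 with f(λ) < c̄_N. Then the function f is continuous and nondecreasing on [λ, 1], and there exist real numbers λ < η_N ≤ η_{N-1} ≤ ⋯ ≤ η_1 < 1 and 0 = ξ_N ≤ ξ_{N-1} ≤ ⋯ ≤ ξ_1 ≤ 1 such that f(ξ_k) = c_k, f(η_k) = c̄_k and η_k ≤ ξ_k for every k = 1,…,N. In particular, v_k := η_k u₊ and u_k := ξ_k u₊ are decreasing sequences in ℝ^d with v_k ≤ u_k componentwise. -/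

import Mathlib

open MeasureTheory

/-- Proposition 3.11 of the paper: fitting the initial default-free and
defaultable term structures simultaneously.  The function
`f(ξ) = ∫ exp(ξ⟨u₊,y⟩) dμ` is continuous and nondecreasing on `[λ,1]`, and there
exist `λ < η_N ≤ ⋯ ≤ η_1 < 1` and `0 = ξ_N ≤ ⋯ ≤ ξ_1 ≤ 1` with `f(ξ_k) = c_k`,
`f(η_k) = c̄_k` and `η_k ≤ ξ_k`; in particular `v_k := η_k u₊` and
`u_k := ξ_k u₊` are decreasing with `v_k ≤ u_k` componentwise. -/
theorem fit_defaultable_term_structure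
    (d N : ℕ) (hN : 0 < N)
    (μ : Measure (Fin d → ℝ)) [IsProbabilityMeasure μ]
    (hsupp : μ {y | ¬ ∀ i, 0 ≤ y i} = 0)
    (uplus : Fin d → ℝ) (huplus : ∀ i, 0 ≤ uplus i)
    (f : ℝ → ℝ)
    (hf : ∀ ξ : ℝ, f ξ = ∫ y, Real.exp (ξ * ∑ i, uplus i * y i) ∂μ)
    (c cbar : Fin N → ℝ)
    (hc_anti : Antitone c) (hcbar_anti : Antitone cbar)
    (hcN : c ⟨N - 1, Nat.sub_lt hN one_pos⟩ = 1)
    (hcbarN : 0 < cbar ⟨N - 1, Nat.sub_lt hN one_pos⟩)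
    (hcbar_le : ∀ k, cbar k ≤ c k)
    (hf1_int : Integrable (fun y => Real.exp (∑ i, uplus i * y i)) μ)
    (hf1_gt : c ⟨0, hN⟩ < f 1)
    (lam : ℝ) (hlam : lam < 0)
    (hflam : f lam < cbar ⟨N - 1, Nat.sub_lt hN one_pos⟩) :
    ContinuousOn f (Set.Icc lam 1) ∧
    MonotoneOn f (Set.Icc lam 1) ∧
    ∃ η ξ : Fin N → ℝ,
      Antitone η ∧ Antitone ξ ∧
      (∀ k, lam < η k ∧ η k < 1) ∧
      ξ ⟨N - 1, Nat.sub_lt hN one_pos⟩ = 0 ∧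
      (∀ k, 0 ≤ ξ k ∧ ξ k ≤ 1) ∧
      (∀ k, f (ξ k) = c k) ∧
      (∀ k, f (η k) = cbar k) ∧
      (∀ k, η k ≤ ξ k) ∧
      Antitone (fun k => η k • uplus) ∧
      Antitone (fun k => ξ k • uplus) ∧
      (∀ k, η k • uplus ≤ ξ k • uplus) := by
  have hg_cont : Continuous (fun y : Fin d → ℝ => ∑ i, uplus i * y i) := by
    apply continuous_finset_sum
    intro i _
    exact continuous_const.mul (continuous_apply i)
  have hg_ae : ∀ᵐ y ∂μ, 0 ≤ ∑ i, uplus i * y i := by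
    have h : ∀ᵐ y ∂μ, ∀ i, 0 ≤ y i := (ae_iff).mpr hsupp
    filter_upwards [h] with y hy
    exact Finset.sum_nonneg fun i _ => mul_nonneg (huplus i) (hy i)
  have hmeas : ∀ ξ : ℝ,
      AEStronglyMeasurable (fun y => Real.exp (ξ * ∑ i, uplus i * y i)) μ :=
    fun ξ => (Real.continuous_exp.comp (continuous_const.mul hg_cont)).aestronglyMeasurable
  have hint : ∀ ξ : ℝ, ξ ≤ 1 →
      Integrable (fun y => Real.exp (ξ * ∑ i, uplus i * y i)) μ := by
    intro ξ hξ
    refine hf1_int.mono (hmeas ξ) ?_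
    filter_upwards [hg_ae] with y hy
    rw [Real.norm_eq_abs, Real.norm_eq_abs, abs_of_pos (Real.exp_pos _),
      abs_of_pos (Real.exp_pos _)]
    exact Real.exp_le_exp.mpr (by nlinarith)
  have hcont : ContinuousOn f (Set.Icc lam 1) := by
    rw [continuousOn_iff_continuous_restrict]
    have heq : (Set.Icc lam 1).restrict f =
        fun ξ : Set.Icc lam 1 => ∫ y, Real.exp (ξ.1 * ∑ i, uplus i * y i) ∂μ := by
      funext ξ; exact hf ξ.1
    change Continuous ((Set.Icc lam 1).restrict f)
    rw [heq]
    apply continuous_of_dominated (bound := fun y => Real.exp (∑ i, uplus i * y i))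
    · exact fun ξ => hmeas ξ.1
    · intro ξ
      filter_upwards [hg_ae] with y hy
      rw [Real.norm_eq_abs, abs_of_pos (Real.exp_pos _)]
      exact Real.exp_le_exp.mpr (by nlinarith [ξ.2.2])
    · exact hf1_int
    · filter_upwards with y
      exact Real.continuous_exp.comp (continuous_subtype_val.mul continuous_const)
  have hmono : MonotoneOn f (Set.Icc lam 1) := by
    intro a ha b hb hab
    rw [hf a, hf b]
    refine integral_mono_ae (hint a ha.2) (hint b hb.2) ?_
    filter_upwards [hg_ae] with y hy
    exact Real.exp_le_exp.mpr (by nlinarith)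
  have hf0 : f 0 = 1 := by
    rw [hf 0]
    simp
  have hlam1 : lam ≤ (1:ℝ) := hlam.le.trans zero_le_one
  have hle_last : ∀ k : Fin N, k ≤ ⟨N - 1, Nat.sub_lt hN one_pos⟩ := by
    intro k
    exact Fin.le_def.mpr (by simp only [Fin.val_mk]; omega)
  have hfirst_le : ∀ k : Fin N, (⟨0, hN⟩ : Fin N) ≤ k := fun k => Fin.mk_le_of_le_val (Nat.zero_le _)
  have hcN' : ∀ k, (1:ℝ) ≤ c k := fun k => hcN ▸ hc_anti (hle_last k)
  have hc1 : ∀ k, c k ≤ c ⟨0, hN⟩ := fun k => hc_anti (hfirst_le k)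
  have hcbarlam : ∀ k, f lam < cbar k := fun k => lt_of_lt_of_le hflam (hcbar_anti (hle_last k))
  have hck_lt : ∀ k, c k < f 1 := fun k => lt_of_le_of_lt (hc1 k) hf1_gt
  have hcbark_lt : ∀ k, cbar k < f 1 := fun k => lt_of_le_of_lt ((hcbar_le k).trans (hc1 k)) hf1_gt
  -- key inf lemma
  have key : ∀ a cv : ℝ, lam ≤ a → a ≤ 1 → f a ≤ cv → cv < f 1 →
      sInf (Set.Icc a 1 ∩ f ⁻¹' Set.Ici cv) ∈ Set.Icc a 1 ∩ f ⁻¹' Set.Ici cv ∧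
      f (sInf (Set.Icc a 1 ∩ f ⁻¹' Set.Ici cv)) = cv := by
    intro a cv hla ha1 hfa hcv
    set S := Set.Icc a 1 ∩ f ⁻¹' Set.Ici cv with hS
    have hScont : ContinuousOn f (Set.Icc a 1) := hcont.mono (Set.Icc_subset_Icc hla le_rfl)
    have hSclosed : IsClosed S := hScont.preimage_isClosed_of_isClosed isClosed_Icc isClosed_Ici
    have hne : S.Nonempty := ⟨1, ⟨⟨ha1, le_rfl⟩, hcv.le⟩⟩
    have hbdd : BddBelow S := ⟨a, fun x hx => hx.1.1⟩
    have hmem : sInf S ∈ S := hSclosed.csInf_mem hne hbdd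
    refine ⟨hmem, le_antisymm ?_ hmem.2⟩
    by_contra hlt
    push_neg at hlt
    have h1 : a ≤ sInf S := hmem.1.1
    obtain ⟨x, hx, hfx⟩ :=
      intermediate_value_Icc h1 (hScont.mono (Set.Icc_subset_Icc le_rfl hmem.1.2)) ⟨hfa, hlt.le⟩
    have hxS : x ∈ S := ⟨⟨hx.1, hx.2.trans hmem.1.2⟩, hfx.ge⟩
    have hle := csInf_le hbdd hxS
    have hxeq : x = sInf S := le_antisymm hx.2 hle
    rw [hxeq] at hfx
    exact (ne_of_gt hlt) hfx
  -- define the sequences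
  refine ⟨hcont, hmono,
    (fun k => sInf (Set.Icc lam 1 ∩ f ⁻¹' Set.Ici (cbar k))),
    (fun k => sInf (Set.Icc 0 1 ∩ f ⁻¹' Set.Ici (c k))), ?_, ?_, ?_, ?_, ?_, ?_, ?_, ?_, ?_, ?_, ?_⟩
  case _ =>
    -- Antitone η
    intro k k' hkk'
    exact csInf_le_csInf ⟨lam, fun x hx => hx.1.1⟩
      ⟨1, ⟨⟨hlam1, le_rfl⟩, (hcbark_lt k).le⟩⟩
      (Set.inter_subset_inter_right _ (Set.preimage_mono (Set.Ici_subset_Ici.mpr (hcbar_anti hkk'))))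
  case _ =>
    -- Antitone ξ
    intro k k' hkk'
    exact csInf_le_csInf ⟨0, fun x hx => hx.1.1⟩
      ⟨1, ⟨⟨zero_le_one, le_rfl⟩, (hck_lt k).le⟩⟩
      (Set.inter_subset_inter_right _ (Set.preimage_mono (Set.Ici_subset_Ici.mpr (hc_anti hkk'))))
  case _ =>
    -- lam < η k < 1
    intro k
    obtain ⟨hmem, hfval⟩ := key lam (cbar k) le_rfl hlam1 (hcbarlam k).le (hcbark_lt k)
    constructor
    · refine hmem.1.1.lt_of_ne fun h => ?_
      rw [← h] at hfval
      exact (hcbarlam k).ne hfval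
    · refine hmem.1.2.lt_of_ne fun h => ?_
      rw [h] at hfval
      exact (hcbark_lt k).ne' hfval
  case _ =>
    -- ξ_N = 0
    refine le_antisymm (csInf_le ⟨0, fun x hx => hx.1.1⟩ ?_) ?_
    · refine ⟨⟨le_rfl, zero_le_one⟩, ?_⟩
      simp [Set.mem_preimage, Set.mem_Ici, hf0, hcN]
    · obtain ⟨hmem, _⟩ := key 0 (c ⟨N - 1, Nat.sub_lt hN one_pos⟩) hlam.le zero_le_one
        (hf0.le.trans (hcN' _)) (hck_lt _)
      exact hmem.1.1
  case _ =>
    intro k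
    obtain ⟨hmem, _⟩ := key 0 (c k) hlam.le zero_le_one (hf0.le.trans (hcN' k)) (hck_lt k)
    exact ⟨hmem.1.1, hmem.1.2⟩
  case _ =>
    intro k
    exact (key 0 (c k) hlam.le zero_le_one (hf0.le.trans (hcN' k)) (hck_lt k)).2
  case _ =>
    intro k
    exact (key lam (cbar k) le_rfl hlam1 (hcbarlam k).le (hcbark_lt k)).2
  case _ =>
    -- η k ≤ ξ k
    intro k
    refine csInf_le_csInf ⟨lam, fun x hx => hx.1.1⟩ ?_ ?_
    · obtain ⟨hmem, _⟩ := key 0 (c k) hlam.le zero_le_one (hf0.le.trans (hcN' k)) (hck_lt k)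
      exact ⟨_, hmem⟩
    · exact Set.inter_subset_inter (Set.Icc_subset_Icc hlam.le le_rfl)
        (Set.preimage_mono (Set.Ici_subset_Ici.mpr (hcbar_le k)))
  case _ =>
    -- Antitone η • uplus
    intro k k' hkk' i
    have hη : sInf (Set.Icc lam 1 ∩ f ⁻¹' Set.Ici (cbar k')) ≤
        sInf (Set.Icc lam 1 ∩ f ⁻¹' Set.Ici (cbar k)) :=
      csInf_le_csInf ⟨lam, fun x hx => hx.1.1⟩
        ⟨1, ⟨⟨hlam1, le_rfl⟩, (hcbark_lt k).le⟩⟩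
        (Set.inter_subset_inter_right _ (Set.preimage_mono (Set.Ici_subset_Ici.mpr (hcbar_anti hkk'))))
    simpa using mul_le_mul_of_nonneg_right hη (huplus i)
  case _ =>
    intro k k' hkk' i
    have hξ : sInf (Set.Icc 0 1 ∩ f ⁻¹' Set.Ici (c k')) ≤
        sInf (Set.Icc 0 1 ∩ f ⁻¹' Set.Ici (c k)) :=
      csInf_le_csInf ⟨0, fun x hx => hx.1.1⟩
        ⟨1, ⟨⟨zero_le_one, le_rfl⟩, (hck_lt k).le⟩⟩
        (Set.inter_subset_inter_right _ (Set.preimage_mono (Set.Ici_subset_Ici.mpr (hc_anti hkk'))))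
    simpa using mul_le_mul_of_nonneg_right hξ (huplus i)
  case _ =>
    intro k i
    have h : sInf (Set.Icc lam 1 ∩ f ⁻¹' Set.Ici (cbar k)) ≤
        sInf (Set.Icc 0 1 ∩ f ⁻¹' Set.Ici (c k)) := by
      refine csInf_le_csInf ⟨lam, fun x hx => hx.1.1⟩ ?_ ?_
      · obtain ⟨hmem, _⟩ := key 0 (c k) hlam.le zero_le_one (hf0.le.trans (hcN' k)) (hck_lt k)
        exact ⟨_, hmem⟩
      · exact Set.inter_subset_inter (Set.Icc_subset_Icc hlam.le le_rfl)
          (Set.preimage_mono (Set.Ici_subset_Ici.mpr (hcbar_le k)))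
    simpa using mul_le_mul_of_nonneg_right h (huplus i)
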